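/- Let ρ0, ρ1 be positive definite density matrices on ℂ^D. Then there exists an orthonormal basis v_1,…,v_D of ℂ^D such that Σ_{b=1}^D √(Re ⟨v_b, ρ0 v_b⟩) · √(Re ⟨v_b, ρ1 v_b⟩) = tr √(ρ1^{1/2} ρ0 ρ1^{1/2}). In other words, the lower bound tr √(ρ1^{1/2} ρ0 ρ1^{1/2}) on the statistical overlap is achieved by an orthogonal projection-valued measurement, namely the one onto an eigenbasis of M = ρ1^{-1/2} √(ρ1^{1/2} ρ0 ρ1^{1/2}) ρ1^{-1/2}. -/

import Mathlib

open Matrix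
open scoped ComplexOrder

open scoped MatrixOrder in
/-- Port helper: the positive semidefinite square root of a positive semidefinite matrix
(formerly Mathlib's `Matrix.PosSemidef.sqrt`, now expressed via `CFC.sqrt`). -/
noncomputable def Matrix.PosSemidef.sqrt {n : Type*} [Fintype n] [DecidableEq n]
    {A : Matrix n n ℂ} (_hA : A.PosSemidef) : Matrix n n ℂ :=
  CFC.sqrt A

open scoped MatrixOrder in
theorem Matrix.PosSemidef.posSemidef_sqrt {n : Type*} [Fintype n] [DecidableEq n]
    {A : Matrix n n ℂ} (hA : A.PosSemidef) : hA.sqrt.PosSemidef :=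
  Matrix.nonneg_iff_posSemidef.mp (CFC.sqrt_nonneg A)

open scoped MatrixOrder in
theorem Matrix.PosSemidef.sqrt_mul_self' {n : Type*} [Fintype n] [DecidableEq n]
    {A : Matrix n n ℂ} (hA : A.PosSemidef) : hA.sqrt * hA.sqrt = A :=
  CFC.sqrt_mul_sqrt_self A (Matrix.nonneg_iff_posSemidef.mpr hA)

/-- The sandwiched matrix `ρ1^{1/2} ρ0 ρ1^{1/2}` is positive semidefinite. -/
noncomputable def sandwichPosSemidef {D : ℕ} {ρ0 ρ1 : Matrix (Fin D) (Fin D) ℂ}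
    (hρ0 : ρ0.PosSemidef) (hρ1 : ρ1.PosSemidef) :
    (hρ1.sqrt * ρ0 * hρ1.sqrt).PosSemidef := by
  have h := hρ0.mul_mul_conjTranspose_same hρ1.sqrt
  rwa [hρ1.posSemidef_sqrt.isHermitian.eq] at h

/-- For positive definite density matrices, the fidelity lower bound on the statistical
overlap is achieved by an orthogonal projection-valued measurement, i.e. there is an
orthonormal basis `v_1, …, v_D` of `ℂ^D` on which the statistical overlap equals
`tr √(ρ1^{1/2} ρ0 ρ1^{1/2})`. -/
theorem exists_orthonormal_basis_achieving_fidelity {D : ℕ}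
    (ρ0 ρ1 : Matrix (Fin D) (Fin D) ℂ)
    (hρ0 : ρ0.PosDef) (hρ1 : ρ1.PosDef)
    (hρ0t : ρ0.trace = 1) (hρ1t : ρ1.trace = 1) :
    ∃ v : Fin D → (Fin D → ℂ),
      (∀ b c, star (v b) ⬝ᵥ v c = if b = c then 1 else 0) ∧
      ∑ b, Real.sqrt ((star (v b) ⬝ᵥ ρ0 *ᵥ v b).re) * Real.sqrt ((star (v b) ⬝ᵥ ρ1 *ᵥ v b).re)
        = ((sandwichPosSemidef hρ0.posSemidef hρ1.posSemidef).sqrt).trace.re := by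
  classical
  set R : Matrix (Fin D) (Fin D) ℂ := hρ1.posSemidef.sqrt with hRdef
  have hRH : Rᴴ = R := hρ1.posSemidef.posSemidef_sqrt.isHermitian
  have hRR : R * R = ρ1 := hρ1.posSemidef.sqrt_mul_self'
  have hRdet : IsUnit R.det := by
    have hmul : R.det * R.det = ρ1.det := by rw [← det_mul, hRR]
    have hne : ρ1.det ≠ 0 := hρ1.det_pos.ne'
    refine isUnit_iff_ne_zero.mpr fun h0 => hne ?_
    rw [← hmul, h0, zero_mul]
  haveI : Invertible R := R.invertibleOfIsUnitDet hRdet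
  have hRiH : (R⁻¹)ᴴ = R⁻¹ := by rw [conjTranspose_nonsing_inv, hRH]
  have hS := sandwichPosSemidef hρ0.posSemidef hρ1.posSemidef
  set T : Matrix (Fin D) (Fin D) ℂ := hS.sqrt with hTdef
  have hTT : T * T = R * ρ0 * R := hS.sqrt_mul_self'
  have hT : T.PosSemidef := hS.posSemidef_sqrt
  set M : Matrix (Fin D) (Fin D) ℂ := R⁻¹ * T * R⁻¹ with hMdef
  have hM : M.PosSemidef := by
    have := hT.mul_mul_conjTranspose_same R⁻¹
    rwa [hRiH] at this
  have key : M * ρ1 * M = ρ0 := by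
    rw [hMdef, ← hRR]
    simp only [Matrix.mul_assoc, Matrix.inv_mul_cancel_left_of_invertible,
      Matrix.mul_inv_cancel_left_of_invertible]
    rw [← Matrix.mul_assoc T T, hTT]
    simp only [Matrix.mul_assoc, Matrix.inv_mul_cancel_left_of_invertible,
      Matrix.mul_inv_cancel_left_of_invertible]
    rw [Matrix.mul_nonsing_inv R hRdet, Matrix.mul_one]
  have hMH : M.IsHermitian := hM.isHermitian
  set v : Fin D → (Fin D → ℂ) := fun b => ⇑(hMH.eigenvectorBasis b) with hvdef
  set lam : Fin D → ℝ := hMH.eigenvalues with hlamdef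
  have hlam : ∀ b, 0 ≤ lam b := fun b => hM.eigenvalues_nonneg b
  have heig : ∀ b, M *ᵥ v b = (lam b : ℂ) • v b := by
    intro b
    have := hMH.mulVec_eigenvectorBasis b
    rwa [RCLike.real_smul_eq_coe_smul (K := ℂ)] at this
  refine ⟨v, ?_, ?_⟩
  · intro b c
    have horth := hMH.eigenvectorBasis.orthonormal
    rw [orthonormal_iff_ite] at horth
    have := horth b c
    rwa [EuclideanSpace.inner_eq_star_dotProduct, dotProduct_comm] at this
  · -- eigenvector dot products
    have hstar : ∀ b, star (v b) ᵥ* M = (lam b : ℂ) • star (v b) := by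
      intro b
      have h1 : star (M *ᵥ v b) = star (v b) ᵥ* Mᴴ := star_mulVec M (v b)
      rw [hMH.eq] at h1
      rw [← h1, heig b, star_smul]
      congr 1
      simp [Complex.ext_iff]
    have hρ0v : ∀ b, star (v b) ⬝ᵥ ρ0 *ᵥ v b
        = ((lam b : ℂ))^2 * (star (v b) ⬝ᵥ ρ1 *ᵥ v b) := by
      intro b
      conv_lhs => rw [← key]
      rw [Matrix.mul_assoc, ← Matrix.mulVec_mulVec, Matrix.dotProduct_mulVec, hstar b,
        smul_dotProduct,
        ← Matrix.mulVec_mulVec, heig b, Matrix.mulVec_smul, dotProduct_smul,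
        smul_eq_mul, smul_eq_mul]
      ring
    have hr : ∀ b, 0 ≤ (star (v b) ⬝ᵥ ρ1 *ᵥ v b).re :=
      fun b => hρ1.posSemidef.re_dotProduct_nonneg (v b)
    -- rewrite each summand
    have hterm : ∀ b, Real.sqrt ((star (v b) ⬝ᵥ ρ0 *ᵥ v b).re)
        * Real.sqrt ((star (v b) ⬝ᵥ ρ1 *ᵥ v b).re)
        = ((lam b : ℂ) * (star (v b) ⬝ᵥ ρ1 *ᵥ v b)).re := by
      intro b
      rw [hρ0v b]
      have : (((lam b : ℂ))^2 * (star (v b) ⬝ᵥ ρ1 *ᵥ v b)).re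
          = (lam b)^2 * (star (v b) ⬝ᵥ ρ1 *ᵥ v b).re := by
        rw [← Complex.ofReal_pow]
        exact Complex.re_ofReal_mul _ _
      rw [this, Real.sqrt_mul (sq_nonneg _), Real.sqrt_sq (hlam b), Complex.re_ofReal_mul,
        mul_assoc, Real.mul_self_sqrt (hr b)]
    simp only [hterm]
    -- sum equals trace of T
    have hsum : ∑ b, ((lam b : ℂ) * (star (v b) ⬝ᵥ ρ1 *ᵥ v b)) = T.trace := by
      have hterm2 : ∀ b, (lam b : ℂ) * (star (v b) ⬝ᵥ ρ1 *ᵥ v b)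
          = star (v b) ⬝ᵥ (ρ1 * M) *ᵥ v b := by
        intro b
        rw [← Matrix.mulVec_mulVec, heig b, Matrix.mulVec_smul, dotProduct_smul]
        simp [smul_eq_mul]
      simp only [hterm2]
      set U : Matrix (Fin D) (Fin D) ℂ := (hMH.eigenvectorUnitary : Matrix (Fin D) (Fin D) ℂ)
        with hUdef
      have hUv : ∀ i b, U i b = v b i := fun i b => hMH.eigenvectorUnitary_apply i b
      have hdiag : ∀ b, star (v b) ⬝ᵥ (ρ1 * M) *ᵥ v b = (star U * (ρ1 * M) * U) b b := by
        intro b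
        simp only [Matrix.mul_apply, dotProduct, Matrix.mulVec, Matrix.star_apply,
          star_eq_conjTranspose, Matrix.conjTranspose_apply, hUv, Pi.star_apply,
          Finset.sum_mul, Finset.mul_sum]
        rw [Finset.sum_comm]
        refine Finset.sum_congr rfl fun j _ => Finset.sum_congr rfl fun i _ =>
          Finset.sum_congr rfl fun k _ => by ring
      simp only [hdiag]
      have htrU : ∑ b, (star U * (ρ1 * M) * U) b b = (star U * (ρ1 * M) * U).trace := rfl
      have hUU : U * star U = 1 := Matrix.mem_unitaryGroup_iff.mp hMH.eigenvectorUnitary.2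
      rw [htrU, Matrix.trace_mul_comm, ← Matrix.mul_assoc, hUU, Matrix.one_mul]
      -- trace (ρ1 * M) = trace T
      rw [← hRR, hMdef]
      rw [show R * R * (R⁻¹ * T * R⁻¹) = R * (T * R⁻¹) by
        simp only [Matrix.mul_assoc, Matrix.mul_inv_cancel_left_of_invertible]]
      rw [Matrix.trace_mul_comm, Matrix.mul_assoc, Matrix.nonsing_inv_mul R hRdet,
        Matrix.mul_one]
    calc ∑ b, ((lam b : ℂ) * (star (v b) ⬝ᵥ ρ1 *ᵥ v b)).re
        = (∑ b, ((lam b : ℂ) * (star (v b) ⬝ᵥ ρ1 *ᵥ v b))).re := by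
          rw [Complex.re_sum]
      _ = T.trace.re := by rw [hsum]
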